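/- For the Burling sequence of graphs G_n with stable-set families S_n (defined recursively below), for every positive integer n there exists a tree-decomposition of G_n such that every bag induces a star forest and every member of S_n is contained in some bag. In particular tree-χ(G_n) ≤ 2. -/

import Mathlib

open SimpleGraph

structure TreeDecomp {V : Type} (G : SimpleGraph V) where
  ι : Type
  tree : SimpleGraph ι
  isTree : tree.IsTree
  bag : ι → Finset V
  covers_edge : ∀ ⦃u v : V⦄, G.Adj u v → ∃ t, u ∈ bag t ∧ v ∈ bag t
  support_connected : ∀ v : V, (tree.induce {t | v ∈ bag t}).Connected

noncomputable def indepNum {V : Type} (G : SimpleGraph V) (s : Set V) : ℕ :=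
  sSup {n | ∃ t : Finset V, ↑t ⊆ s ∧ (↑t : Set V).Pairwise (fun a b => ¬ G.Adj a b) ∧ t.card = n}

noncomputable def alpha {V : Type} (G : SimpleGraph V) : ℕ := indepNum G Set.univ

noncomputable def chiNat {V : Type} (G : SimpleGraph V) : ℕ := G.chromaticNumber.toNat

noncomputable def tw {V : Type} (G : SimpleGraph V) : ℕ :=
  sInf {w | ∃ D : TreeDecomp G, ∀ t, (D.bag t).card ≤ w + 1}

noncomputable def treeAlpha {V : Type} (G : SimpleGraph V) : ℕ :=
  sInf {k | ∃ D : TreeDecomp G, ∀ t, indepNum G ↑(D.bag t) ≤ k}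

noncomputable def treeChi {V : Type} (G : SimpleGraph V) : ℕ :=
  sInf {k | ∃ D : TreeDecomp G, ∀ t, chiNat (G.induce ↑(D.bag t)) ≤ k}

noncomputable def treeTw {V : Type} (G : SimpleGraph V) : ℕ :=
  sInf {k | ∃ D : TreeDecomp G, ∀ t, tw (G.induce ↑(D.bag t)) ≤ k}

noncomputable def omegaNum {V : Type} (G : SimpleGraph V) : ℕ :=
  sSup {n | ∃ t : Finset V, G.IsClique ↑t ∧ t.card = n}

def completion {V : Type} (H : SimpleGraph V) :
    SimpleGraph (V ⊕ {p : Sym2 V // ¬ p.IsDiag ∧ p ∉ H.edgeSet}) :=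
  SimpleGraph.fromRel (fun x y =>
    match x, y with
    | .inl u, .inl v => H.Adj u v
    | .inl u, .inr p => u ∈ p.1
    | _, _ => False)

/-- A star forest: every component is a star, equivalently for every edge `uv`,
either `v` is the unique neighbor of `u` or `u` is the unique neighbor of `v`. -/
def IsStarForest {W : Type} (G : SimpleGraph W) : Prop :=
  ∀ u v, G.Adj u v → (∀ w, G.Adj u w → w = v) ∨ (∀ w, G.Adj v w → w = u)

structure BurlingStep where
  V : Type
  G : SimpleGraph V
  S : Set (Set V)

/-- One step of the Burling construction. -/
def burlingNext (B : BurlingStep) : BurlingStep where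
  V := B.V ⊕ ((↥B.S × B.V) ⊕ (↥B.S × ↥B.S))
  G := SimpleGraph.fromRel (fun x y =>
    match x, y with
    | .inl u, .inl v => B.G.Adj u v
    | .inr (.inl (S, u)), .inr (.inl (S', v)) => S = S' ∧ B.G.Adj u v
    | .inr (.inr (S, Q)), .inr (.inl (S', v)) => S = S' ∧ v ∈ (Q : Set B.V)
    | _, _ => False)
  S := {A | ∃ S Q : ↥B.S,
      A = (Sum.inl '' (S : Set B.V)) ∪
            ((fun v => (Sum.inr (Sum.inl (S, v)) : B.V ⊕ ((↥B.S × B.V) ⊕ (↥B.S × ↥B.S)))) ''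
              (Q : Set B.V)) ∨
      A = (Sum.inl '' (S : Set B.V)) ∪ {Sum.inr (Sum.inr (S, Q))}}

/-- `burling n` is the pair `(G_{n+1}, 𝒮_{n+1})` of the Burling sequence. -/
def burling : ℕ → BurlingStep
  | 0 => ⟨Unit, ⊥, {Set.univ}⟩
  | n + 1 => burlingNext (burling n)

lemma reach_invariant {V : Type} {G : SimpleGraph V} {σ : V → Prop}
    (h : ∀ ⦃u v⦄, G.Adj u v → (σ u ↔ σ v)) {u v : V} (hr : G.Reachable u v) : σ u ↔ σ v := by
  obtain ⟨w⟩ := hr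
  induction w with
  | nil => exact Iff.rfl
  | cons ha _ ih => exact (h ha).trans ih

lemma connected_of_base {V : Type} {G : SimpleGraph V} (x : V) (h : ∀ y, G.Reachable y x) :
    G.Connected := by
  rw [SimpleGraph.connected_iff]
  exact ⟨fun a b => (h a).trans (h b).symm, ⟨x⟩⟩

lemma reach_adj_base {V : Type} {G : SimpleGraph V} (a : V) {u v : V} (huv : G.Adj u v) :
    G.Reachable u a ↔ G.Reachable v a :=
  ⟨fun h => (huv.symm.reachable).trans h, fun h => huv.reachable.trans h⟩

lemma reach_map {α β : Type} {G : SimpleGraph α} {H : SimpleGraph β} (f : α → β)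
    (hf : ∀ ⦃a b⦄, G.Adj a b → H.Adj (f a) (f b)) {u v : α} (h : G.Reachable u v) :
    H.Reachable (f u) (f v) := by
  obtain ⟨w⟩ := h
  induction w with
  | nil => exact Reachable.refl _
  | cons ha _ ih => exact (hf ha).reachable.trans ih

namespace Step

variable (B : BurlingStep) (D : TreeDecomp B.G) (tS : ↥B.S → D.ι)

/-- vertex embeddings -/
abbrev vl (u : B.V) : (burlingNext B).V := Sum.inl u
abbrev vm (S : ↥B.S) (u : B.V) : (burlingNext B).V := Sum.inr (Sum.inl (S, u))
abbrev vr (S Q : ↥B.S) : (burlingNext B).V := Sum.inr (Sum.inr (S, Q))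

@[simp] lemma vl_inj {a b : B.V} : vl B a = vl B b ↔ a = b := Sum.inl_injective.eq_iff
@[simp] lemma vm_inj {S S' : ↥B.S} {a b : B.V} : vm B S a = vm B S' b ↔ S = S' ∧ a = b :=
  ⟨fun h => by cases h; exact ⟨rfl, rfl⟩, fun ⟨h1, h2⟩ => h1 ▸ h2 ▸ rfl⟩
@[simp] lemma vr_inj {S S' Q Q' : ↥B.S} : vr B S Q = vr B S' Q' ↔ S = S' ∧ Q = Q' :=
  ⟨fun h => by cases h; exact ⟨rfl, rfl⟩, fun ⟨h1, h2⟩ => h1 ▸ h2 ▸ rfl⟩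
@[simp] lemma vl_ne_vm {a b : B.V} {S : ↥B.S} : vl B a ≠ vm B S b := fun h => by cases h
@[simp] lemma vm_ne_vl {a b : B.V} {S : ↥B.S} : vm B S b ≠ vl B a := fun h => by cases h
@[simp] lemma vl_ne_vr {a : B.V} {S Q : ↥B.S} : vl B a ≠ vr B S Q := fun h => by cases h
@[simp] lemma vr_ne_vl {a : B.V} {S Q : ↥B.S} : vr B S Q ≠ vl B a := fun h => by cases h
@[simp] lemma vm_ne_vr {a : B.V} {S' S Q : ↥B.S} : vm B S' a ≠ vr B S Q := fun h => by cases h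
@[simp] lemma vr_ne_vm {a : B.V} {S' S Q : ↥B.S} : vr B S Q ≠ vm B S' a := fun h => by cases h

lemma nextAdj_elim {x y : (burlingNext B).V} (h : (burlingNext B).G.Adj x y) :
    (∃ u v, B.G.Adj u v ∧ x = vl B u ∧ y = vl B v) ∨
    (∃ S : ↥B.S, ∃ u v, B.G.Adj u v ∧ x = vm B S u ∧ y = vm B S v) ∨
    (∃ S Q : ↥B.S, ∃ v, v ∈ (Q : Set B.V) ∧
      ((x = vr B S Q ∧ y = vm B S v) ∨ (y = vr B S Q ∧ x = vm B S v))) := by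
  obtain ⟨hne, h1 | h1⟩ := h
  · rcases x with u | ⟨⟨S,u⟩ | ⟨S,Q⟩⟩ <;> rcases y with v | ⟨⟨S',v⟩ | ⟨S',Q'⟩⟩ <;>
      first
      | exact Or.inl ⟨u, v, h1, rfl, rfl⟩
      | (obtain ⟨rfl, h2⟩ := h1; exact Or.inr (Or.inl ⟨S, u, v, h2, rfl, rfl⟩))
      | (obtain ⟨rfl, h2⟩ := h1; exact Or.inr (Or.inr ⟨S, Q, v, h2, Or.inl ⟨rfl, rfl⟩⟩))
      | exact h1.elim
  · rcases x with u | ⟨⟨S,u⟩ | ⟨S,Q⟩⟩ <;> rcases y with v | ⟨⟨S',v⟩ | ⟨S',Q'⟩⟩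
    · exact Or.inl ⟨u, v, h1.symm, rfl, rfl⟩
    · exact h1.elim
    · exact h1.elim
    · exact h1.elim
    · obtain ⟨rfl, h2⟩ := h1
      exact Or.inr (Or.inl ⟨_, u, v, h2.symm, rfl, rfl⟩)
    · obtain ⟨rfl, h2⟩ := h1
      exact Or.inr (Or.inr ⟨_, _, u, h2, Or.inr ⟨rfl, rfl⟩⟩)
    · exact h1.elim
    · exact h1.elim
    · exact h1.elim

lemma nextAdj_vl {u v : B.V} (h : B.G.Adj u v) :
    (burlingNext B).G.Adj (vl B u) (vl B v) :=
  ⟨fun he => h.ne (Sum.inl.inj he), Or.inl h⟩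

lemma nextAdj_vm {S : ↥B.S} {u v : B.V} (h : B.G.Adj u v) :
    (burlingNext B).G.Adj (vm B S u) (vm B S v) :=
  ⟨fun he => by simp [vm] at he; exact h.ne he, Or.inl ⟨rfl, h⟩⟩

lemma nextAdj_vr {S Q : ↥B.S} {v : B.V} (h : v ∈ (Q : Set B.V)) :
    (burlingNext B).G.Adj (vr B S Q) (vm B S v) :=
  ⟨fun he => by simp [vm, vr] at he, Or.inl ⟨rfl, h⟩⟩

variable (htS : ∀ S : ↥B.S, (S : Set B.V) ⊆ ↑(D.bag (tS S)))

/-- index embeddings -/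
abbrev il (t : D.ι) : D.ι ⊕ ((↥B.S × D.ι) ⊕ (↥B.S × ↥B.S)) := Sum.inl t
abbrev im (S : ↥B.S) (t : D.ι) : D.ι ⊕ ((↥B.S × D.ι) ⊕ (↥B.S × ↥B.S)) := Sum.inr (Sum.inl (S, t))
abbrev ir (S Q : ↥B.S) : D.ι ⊕ ((↥B.S × D.ι) ⊕ (↥B.S × ↥B.S)) := Sum.inr (Sum.inr (S, Q))

def newTree : SimpleGraph (D.ι ⊕ ((↥B.S × D.ι) ⊕ (↥B.S × ↥B.S))) :=
  SimpleGraph.fromRel (fun x y =>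
    match x, y with
    | .inl a, .inl b => D.tree.Adj a b
    | .inr (.inl (S, a)), .inr (.inl (S', b)) => S = S' ∧ D.tree.Adj a b
    | .inl a, .inr (.inl (S, b)) => a = tS S ∧ b = tS S
    | .inr (.inl (S, a)), .inr (.inr (S', Q)) => S = S' ∧ a = tS Q
    | _, _ => False)

lemma newTree_adj_elim {x y} (h : (newTree B D tS).Adj x y) :
    (∃ a b, D.tree.Adj a b ∧ x = il B D a ∧ y = il B D b) ∨
    (∃ S : ↥B.S, ∃ a b, D.tree.Adj a b ∧ x = im B D S a ∧ y = im B D S b) ∨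
    (∃ S : ↥B.S, ((x = il B D (tS S) ∧ y = im B D S (tS S)) ∨
                  (y = il B D (tS S) ∧ x = im B D S (tS S)))) ∨
    (∃ S Q : ↥B.S, ((x = im B D S (tS Q) ∧ y = ir B D S Q) ∨
                    (y = im B D S (tS Q) ∧ x = ir B D S Q))) := by
  obtain ⟨hne, h1 | h1⟩ := h
  · rcases x with a | ⟨⟨S,a⟩ | ⟨S,Q⟩⟩ <;> rcases y with b | ⟨⟨S',b⟩ | ⟨S',Q'⟩⟩
    · exact Or.inl ⟨a, b, h1, rfl, rfl⟩
    · obtain ⟨rfl, rfl⟩ := h1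
      exact Or.inr (Or.inr (Or.inl ⟨S', Or.inl ⟨rfl, rfl⟩⟩))
    · exact h1.elim
    · exact h1.elim
    · obtain ⟨rfl, h2⟩ := h1
      exact Or.inr (Or.inl ⟨_, a, b, h2, rfl, rfl⟩)
    · obtain ⟨rfl, rfl⟩ := h1
      exact Or.inr (Or.inr (Or.inr ⟨_, _, Or.inl ⟨rfl, rfl⟩⟩))
    · exact h1.elim
    · exact h1.elim
    · exact h1.elim
  · rcases x with a | ⟨⟨S,a⟩ | ⟨S,Q⟩⟩ <;> rcases y with b | ⟨⟨S',b⟩ | ⟨S',Q'⟩⟩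
    · exact Or.inl ⟨a, b, h1.symm, rfl, rfl⟩
    · exact h1.elim
    · exact h1.elim
    · obtain ⟨rfl, rfl⟩ := h1
      exact Or.inr (Or.inr (Or.inl ⟨S, Or.inr ⟨rfl, rfl⟩⟩))
    · obtain ⟨rfl, h2⟩ := h1
      exact Or.inr (Or.inl ⟨_, a, b, h2.symm, rfl, rfl⟩)
    · exact h1.elim
    · exact h1.elim
    · obtain ⟨rfl, rfl⟩ := h1
      exact Or.inr (Or.inr (Or.inr ⟨_, _, Or.inr ⟨rfl, rfl⟩⟩))
    · exact h1.elim

lemma newTree_adj_il {a b : D.ι} (h : D.tree.Adj a b) :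
    (newTree B D tS).Adj (il B D a) (il B D b) :=
  ⟨fun he => h.ne (Sum.inl.inj he), Or.inl h⟩

lemma newTree_adj_im {S : ↥B.S} {a b : D.ι} (h : D.tree.Adj a b) :
    (newTree B D tS).Adj (im B D S a) (im B D S b) :=
  ⟨fun he => by simp [im] at he; exact h.ne he, Or.inl ⟨rfl, h⟩⟩

lemma newTree_adj_attach1 (S : ↥B.S) :
    (newTree B D tS).Adj (il B D (tS S)) (im B D S (tS S)) :=
  ⟨fun he => by simp [il, im] at he, Or.inl ⟨rfl, rfl⟩⟩

lemma newTree_adj_attach2 (S Q : ↥B.S) :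
    (newTree B D tS).Adj (im B D S (tS Q)) (ir B D S Q) :=
  ⟨fun he => by simp [im, ir] at he, Or.inl ⟨rfl, rfl⟩⟩

include htS in
lemma sFin (S : ↥B.S) : (S : Set B.V).Finite :=
  Set.Finite.subset (D.bag (tS S)).finite_toSet (htS S)

noncomputable def finS (S : ↥B.S) : Finset B.V := (sFin B D tS htS S).toFinset

@[simp] lemma mem_finS {S : ↥B.S} {u : B.V} : u ∈ finS B D tS htS S ↔ u ∈ (S : Set B.V) :=
  Set.Finite.mem_toFinset _

noncomputable def newBag : D.ι ⊕ ((↥B.S × D.ι) ⊕ (↥B.S × ↥B.S)) → Finset (burlingNext B).V :=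
  letI := Classical.decEq (burlingNext B).V
  fun x => match x with
  | .inl t => (D.bag t).image (fun v => vl B v)
  | .inr (.inl (S, s)) =>
      (finS B D tS htS S).image (fun v => vl B v) ∪ (D.bag s).image (fun v => vm B S v)
  | .inr (.inr (S, Q)) =>
      ((finS B D tS htS S).image (fun v => vl B v) ∪ (finS B D tS htS Q).image (fun v => vm B S v))
        ∪ {vr B S Q}

@[simp] lemma vl_mem_il {u t} : vl B u ∈ newBag B D tS htS (il B D t) ↔ u ∈ D.bag t := by
  simp [newBag]

@[simp] lemma vm_mem_il {S u t} : vm B S u ∉ newBag B D tS htS (il B D t) := by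
  simp [newBag]

@[simp] lemma vr_mem_il {S Q t} : vr B S Q ∉ newBag B D tS htS (il B D t) := by
  simp [newBag]

@[simp] lemma vl_mem_im {u S s} :
    vl B u ∈ newBag B D tS htS (im B D S s) ↔ u ∈ (S : Set B.V) := by
  simp [newBag]

@[simp] lemma vm_mem_im {S' u S s} :
    vm B S' u ∈ newBag B D tS htS (im B D S s) ↔ S' = S ∧ u ∈ D.bag s := by
  simp [newBag]
  try tauto

@[simp] lemma vr_mem_im {S' Q S s} : vr B S' Q ∉ newBag B D tS htS (im B D S s) := by
  simp [newBag]

@[simp] lemma vl_mem_ir {u S Q} :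
    vl B u ∈ newBag B D tS htS (ir B D S Q) ↔ u ∈ (S : Set B.V) := by
  simp [newBag]

@[simp] lemma vm_mem_ir {S' u S Q} :
    vm B S' u ∈ newBag B D tS htS (ir B D S Q) ↔ S' = S ∧ u ∈ (Q : Set B.V) := by
  simp [newBag]
  try tauto

@[simp] lemma vr_mem_ir {S' Q' S Q} :
    vr B S' Q' ∈ newBag B D tS htS (ir B D S Q) ↔ S' = S ∧ Q' = Q := by
  simp [newBag]
  try tauto

def homIl : D.tree →g newTree B D tS :=
  ⟨fun a => il B D a, fun h => newTree_adj_il B D tS h⟩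

def homIm (S : ↥B.S) : D.tree →g newTree B D tS :=
  ⟨fun a => im B D S a, fun h => newTree_adj_im B D tS h⟩

lemma newTree_connected : (newTree B D tS).Connected := by
  obtain ⟨a₀⟩ := D.isTree.isConnected.nonempty
  have hpre := D.isTree.isConnected.preconnected
  apply connected_of_base (il B D a₀)
  have hbase : ∀ a, (newTree B D tS).Reachable (il B D a) (il B D a₀) :=
    fun a => Reachable.map (homIl B D tS) (hpre a a₀)
  have hm : ∀ (S : ↥B.S) (s : D.ι), (newTree B D tS).Reachable (im B D S s) (il B D a₀) := by
    intro S s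
    refine (Reachable.map (homIm B D tS S) (hpre s (tS S))).trans ?_
    exact ((newTree_adj_attach1 B D tS S).symm.reachable).trans (hbase (tS S))
  rintro (a | ⟨⟨S,s⟩ | ⟨S,Q⟩⟩)
  · exact hbase a
  · exact hm S s
  · exact ((newTree_adj_attach2 B D tS S Q).symm.reachable).trans (hm S (tS Q))

lemma del_adj {α : Type} {G : SimpleGraph α} {e : Sym2 α} {u v : α} :
    (G \ SimpleGraph.fromEdgeSet {e}).Adj u v ↔ G.Adj u v ∧ s(u, v) ≠ e := by
  rw [SimpleGraph.sdiff_adj, SimpleGraph.fromEdgeSet_adj]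
  constructor
  · rintro ⟨h1, h2⟩
    exact ⟨h1, fun he => h2 ⟨by simp [he], h1.ne⟩⟩
  · rintro ⟨h1, h2⟩
    exact ⟨h1, fun hc => h2 (by simpa using hc.1)⟩

lemma bridge_il {a b : D.ι} (hab : D.tree.Adj a b)
    (hre : ((newTree B D tS) \ SimpleGraph.fromEdgeSet {s(il B D a, il B D b)}).Reachable
      (il B D a) (il B D b)) : False := by
  have hbr : ¬ (D.tree \ SimpleGraph.fromEdgeSet {s(a, b)}).Reachable a b :=
    ((isAcyclic_iff_forall_adj_isBridge.mp D.isTree.IsAcyclic) hab)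
  set K := D.tree \ SimpleGraph.fromEdgeSet {s(a, b)} with hK
  set σ : D.ι ⊕ ((↥B.S × D.ι) ⊕ (↥B.S × ↥B.S)) → Prop := fun z =>
    match z with
    | .inl x => K.Reachable x a
    | .inr (.inl (S', _)) => K.Reachable (tS S') a
    | .inr (.inr (S', _)) => K.Reachable (tS S') a with hσ
  have hinv : ∀ ⦃u v⦄,
      ((newTree B D tS) \ SimpleGraph.fromEdgeSet {s(il B D a, il B D b)}).Adj u v →
      (σ u ↔ σ v) := by
    intro u v huv
    rw [del_adj] at huv
    obtain ⟨hadj, hne⟩ := huv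
    rcases newTree_adj_elim B D tS hadj with
      ⟨c, d, hcd, rfl, rfl⟩ | ⟨S, c, d, hcd, rfl, rfl⟩ |
      ⟨S, ⟨rfl, rfl⟩ | ⟨rfl, rfl⟩⟩ | ⟨S, Q, ⟨rfl, rfl⟩ | ⟨rfl, rfl⟩⟩
    · have hKcd : K.Adj c d := by
        rw [hK, del_adj]
        refine ⟨hcd, fun he => hne ?_⟩
        have := congrArg (Sym2.map (Sum.inl : D.ι → D.ι ⊕ ((↥B.S × D.ι) ⊕ (↥B.S × ↥B.S)))) he
        simpa using this
      exact reach_adj_base a hKcd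
    · exact Iff.rfl
    · exact Iff.rfl
    · exact Iff.rfl
    · exact Iff.rfl
    · exact Iff.rfl
  have := reach_invariant hinv hre
  simp only [hσ] at this
  exact hbr ((this.mp (Reachable.refl a)).symm)

lemma bridge_im {S : ↥B.S} {a b : D.ι} (hab : D.tree.Adj a b)
    (hre : ((newTree B D tS) \ SimpleGraph.fromEdgeSet {s(im B D S a, im B D S b)}).Reachable
      (im B D S a) (im B D S b)) : False := by
  classical
  have hbr : ¬ (D.tree \ SimpleGraph.fromEdgeSet {s(a, b)}).Reachable a b :=
    ((isAcyclic_iff_forall_adj_isBridge.mp D.isTree.IsAcyclic) hab)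
  set K := D.tree \ SimpleGraph.fromEdgeSet {s(a, b)} with hK
  set σ : D.ι ⊕ ((↥B.S × D.ι) ⊕ (↥B.S × ↥B.S)) → Prop := fun z =>
    match z with
    | .inl _ => K.Reachable (tS S) a
    | .inr (.inl (S', x)) => if S' = S then K.Reachable x a else K.Reachable (tS S) a
    | .inr (.inr (S', Q')) => if S' = S then K.Reachable (tS Q') a else K.Reachable (tS S) a
    with hσ
  have hinv : ∀ ⦃u v⦄,
      ((newTree B D tS) \ SimpleGraph.fromEdgeSet {s(im B D S a, im B D S b)}).Adj u v →
      (σ u ↔ σ v) := by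
    intro u v huv
    rw [del_adj] at huv
    obtain ⟨hadj, hne⟩ := huv
    rcases newTree_adj_elim B D tS hadj with
      ⟨c, d, hcd, rfl, rfl⟩ | ⟨S', c, d, hcd, rfl, rfl⟩ |
      ⟨S', ⟨rfl, rfl⟩ | ⟨rfl, rfl⟩⟩ | ⟨S', Q', ⟨rfl, rfl⟩ | ⟨rfl, rfl⟩⟩
    · exact Iff.rfl
    · by_cases hS : S' = S
      · subst hS
        have hKcd : K.Adj c d := by
          rw [hK, del_adj]
          refine ⟨hcd, fun he => hne ?_⟩
          have := congrArg (Sym2.map (fun x => im B D S' x)) he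
          simpa using this
        simp only [hσ, if_pos rfl]
        exact reach_adj_base a hKcd
      · simp only [hσ, if_neg hS]
    · by_cases hS : S' = S <;> simp [hσ, hS]
    · by_cases hS : S' = S <;> simp [hσ, hS]
    · by_cases hS : S' = S <;> simp [hσ, hS]
    · by_cases hS : S' = S <;> simp [hσ, hS]
  have := reach_invariant hinv hre
  simp only [hσ, if_pos rfl] at this
  exact hbr ((this.mp (Reachable.refl a)).symm)

lemma bridge_attach1 {S : ↥B.S}
    (hre : ((newTree B D tS) \ SimpleGraph.fromEdgeSet {s(il B D (tS S), im B D S (tS S))}).Reachable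
      (il B D (tS S)) (im B D S (tS S))) : False := by
  set σ : D.ι ⊕ ((↥B.S × D.ι) ⊕ (↥B.S × ↥B.S)) → Prop := fun z =>
    match z with
    | .inl _ => False
    | .inr (.inl (S', _)) => S' = S
    | .inr (.inr (S', _)) => S' = S with hσ
  have hinv : ∀ ⦃u v⦄,
      ((newTree B D tS) \ SimpleGraph.fromEdgeSet {s(il B D (tS S), im B D S (tS S))}).Adj u v →
      (σ u ↔ σ v) := by
    intro u v huv
    rw [del_adj] at huv
    obtain ⟨hadj, hne⟩ := huv
    rcases newTree_adj_elim B D tS hadj with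
      ⟨c, d, hcd, rfl, rfl⟩ | ⟨S', c, d, hcd, rfl, rfl⟩ |
      ⟨S', ⟨rfl, rfl⟩ | ⟨rfl, rfl⟩⟩ | ⟨S', Q', ⟨rfl, rfl⟩ | ⟨rfl, rfl⟩⟩
    · exact Iff.rfl
    · exact Iff.rfl
    · have hS : S' ≠ S := by
        rintro rfl
        exact hne rfl
      simp only [hσ]
      exact iff_of_false (fun h => h) (fun h => hS h)
    · have hS : S' ≠ S := by
        rintro rfl
        exact hne (Sym2.eq_swap)
      simp only [hσ]
      exact iff_of_false (fun h => hS h) (fun h => h)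
    · exact Iff.rfl
    · exact Iff.rfl
  have := reach_invariant hinv hre
  simp only [hσ] at this
  exact this.mpr trivial

lemma bridge_attach2 {S Q : ↥B.S}
    (hre : ((newTree B D tS) \ SimpleGraph.fromEdgeSet {s(im B D S (tS Q), ir B D S Q)}).Reachable
      (im B D S (tS Q)) (ir B D S Q)) : False := by
  set σ : D.ι ⊕ ((↥B.S × D.ι) ⊕ (↥B.S × ↥B.S)) → Prop := fun z =>
    match z with
    | .inl _ => False
    | .inr (.inl _) => False
    | .inr (.inr (S', Q')) => S' = S ∧ Q' = Q with hσ
  have hinv : ∀ ⦃u v⦄,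
      ((newTree B D tS) \ SimpleGraph.fromEdgeSet {s(im B D S (tS Q), ir B D S Q)}).Adj u v →
      (σ u ↔ σ v) := by
    intro u v huv
    rw [del_adj] at huv
    obtain ⟨hadj, hne⟩ := huv
    rcases newTree_adj_elim B D tS hadj with
      ⟨c, d, hcd, rfl, rfl⟩ | ⟨S', c, d, hcd, rfl, rfl⟩ |
      ⟨S', ⟨rfl, rfl⟩ | ⟨rfl, rfl⟩⟩ | ⟨S', Q', ⟨rfl, rfl⟩ | ⟨rfl, rfl⟩⟩
    · exact Iff.rfl
    · exact Iff.rfl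
    · exact Iff.rfl
    · exact Iff.rfl
    · have hSQ : ¬ (S' = S ∧ Q' = Q) := by
        rintro ⟨rfl, rfl⟩
        exact hne rfl
      simp only [hσ]
      exact iff_of_false (fun h => h) hSQ
    · have hSQ : ¬ (S' = S ∧ Q' = Q) := by
        rintro ⟨rfl, rfl⟩
        exact hne (Sym2.eq_swap)
      simp only [hσ]
      exact iff_of_false hSQ (fun h => h)
  have := reach_invariant hinv hre
  simp only [hσ] at this
  exact this.mpr ⟨trivial, trivial⟩

lemma newTree_isTree : (newTree B D tS).IsTree := by
  constructor
  · exact newTree_connected B D tS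
  · rw [isAcyclic_iff_forall_adj_isBridge]
    intro x y h
    rw [isBridge_iff]
    intro hre
    rcases newTree_adj_elim B D tS h with
      ⟨c, d, hcd, rfl, rfl⟩ | ⟨S', c, d, hcd, rfl, rfl⟩ |
      ⟨S', ⟨rfl, rfl⟩ | ⟨rfl, rfl⟩⟩ | ⟨S', Q', ⟨rfl, rfl⟩ | ⟨rfl, rfl⟩⟩
    · exact bridge_il B D tS hcd hre
    · exact bridge_im B D tS hcd hre
    · exact bridge_attach1 B D tS hre
    · rw [Sym2.eq_swap] at hre
      exact bridge_attach1 B D tS hre.symm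
    · exact bridge_attach2 B D tS hre
    · rw [Sym2.eq_swap] at hre
      exact bridge_attach2 B D tS hre.symm

lemma newBag_covers : ∀ ⦃u v⦄, (burlingNext B).G.Adj u v →
    ∃ t, u ∈ newBag B D tS htS t ∧ v ∈ newBag B D tS htS t := by
  intro u v h
  rcases nextAdj_elim B h with ⟨a, b, hab, rfl, rfl⟩ | ⟨S, a, b, hab, rfl, rfl⟩ |
    ⟨S, Q, w, hw, ⟨rfl, rfl⟩ | ⟨rfl, rfl⟩⟩
  · obtain ⟨t, h1, h2⟩ := D.covers_edge hab
    exact ⟨il B D t, by simp [h1], by simp [h2]⟩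
  · obtain ⟨t, h1, h2⟩ := D.covers_edge hab
    exact ⟨im B D S t, by simp [h1], by simp [h2]⟩
  · exact ⟨ir B D S Q, by simp, by simp [hw]⟩
  · exact ⟨ir B D S Q, by simp [hw], by simp⟩

lemma newBag_support (v : (burlingNext B).V) :
    ((newTree B D tS).induce {t | v ∈ newBag B D tS htS t}).Connected := by
  rcases v with u | ⟨⟨S, u⟩ | ⟨S, Q⟩⟩
  · -- v = vl u
    set s' : Set (D.ι ⊕ ((↥B.S × D.ι) ⊕ (↥B.S × ↥B.S))) :=
      {t | vl B u ∈ newBag B D tS htS t} with hs'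
    have mem_il : ∀ t, il B D t ∈ s' ↔ u ∈ D.bag t := fun t => by simp [hs']
    have mem_im : ∀ (S : ↥B.S) t, im B D S t ∈ s' ↔ u ∈ (S : Set B.V) := fun S t => by
      simp [hs']
    have mem_ir : ∀ (S Q : ↥B.S), ir B D S Q ∈ s' ↔ u ∈ (S : Set B.V) := fun S Q => by
      simp [hs']
    have hc := D.support_connected u
    obtain ⟨⟨t₀, ht₀⟩⟩ := hc.nonempty
    replace ht₀ : u ∈ D.bag t₀ := ht₀
    have hbase : (il B D t₀) ∈ s' := (mem_il t₀).mpr ht₀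
    apply connected_of_base (⟨il B D t₀, hbase⟩ : ↥s')
    have hil : ∀ (t : D.ι) (ht : u ∈ D.bag t),
        ((newTree B D tS).induce s').Reachable ⟨il B D t, (mem_il t).mpr ht⟩
          ⟨il B D t₀, hbase⟩ := by
      intro t ht
      exact reach_map (G := D.tree.induce {t | u ∈ D.bag t})
        (H := (newTree B D tS).induce s')
        (fun p => ⟨il B D p.1, (mem_il p.1).mpr p.2⟩)
        (fun a b hab => newTree_adj_il B D tS hab) (hc.preconnected ⟨t, ht⟩ ⟨t₀, ht₀⟩)
    have him : ∀ (S : ↥B.S) (hS : u ∈ (S : Set B.V)) (t : D.ι),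
        ((newTree B D tS).induce s').Reachable ⟨im B D S t, (mem_im S t).mpr hS⟩
          ⟨il B D t₀, hbase⟩ := by
      intro S hS t
      refine (reach_map (G := D.tree) (H := (newTree B D tS).induce s')
        (fun p => ⟨im B D S p, (mem_im S p).mpr hS⟩)
        (fun a b hab => newTree_adj_im B D tS hab)
        (D.isTree.isConnected.preconnected t (tS S))).trans ?_
      have hstep : ((newTree B D tS).induce s').Adj
          ⟨im B D S (tS S), (mem_im S (tS S)).mpr hS⟩
          ⟨il B D (tS S), (mem_il (tS S)).mpr (htS S hS)⟩ :=
        (newTree_adj_attach1 B D tS S).symm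
      exact hstep.reachable.trans (hil (tS S) (htS S hS))
    rintro ⟨a | ⟨⟨S, s⟩ | ⟨S, Q⟩⟩, hy⟩
    · exact hil a ((mem_il a).mp hy)
    · exact him S ((mem_im S s).mp hy) s
    · have hS : u ∈ (S : Set B.V) := (mem_ir S Q).mp hy
      have hstep : ((newTree B D tS).induce s').Adj
          ⟨ir B D S Q, hy⟩ ⟨im B D S (tS Q), (mem_im S (tS Q)).mpr hS⟩ :=
        (newTree_adj_attach2 B D tS S Q).symm
      exact hstep.reachable.trans (him S hS (tS Q))
  · -- v = vm S u
    set s' : Set (D.ι ⊕ ((↥B.S × D.ι) ⊕ (↥B.S × ↥B.S))) :=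
      {t | vm B S u ∈ newBag B D tS htS t} with hs'
    have mem_im : ∀ t, im B D S t ∈ s' ↔ u ∈ D.bag t := fun t => by simp [hs']
    have mem_ir : ∀ (Q : ↥B.S), ir B D S Q ∈ s' ↔ u ∈ (Q : Set B.V) := fun Q => by
      simp [hs']
    have hc := D.support_connected u
    obtain ⟨⟨t₀, ht₀⟩⟩ := hc.nonempty
    replace ht₀ : u ∈ D.bag t₀ := ht₀
    have hbase : (im B D S t₀) ∈ s' := (mem_im t₀).mpr ht₀
    apply connected_of_base (⟨im B D S t₀, hbase⟩ : ↥s')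
    have him : ∀ (t : D.ι) (ht : u ∈ D.bag t),
        ((newTree B D tS).induce s').Reachable ⟨im B D S t, (mem_im t).mpr ht⟩
          ⟨im B D S t₀, hbase⟩ := by
      intro t ht
      exact reach_map (G := D.tree.induce {t | u ∈ D.bag t})
        (H := (newTree B D tS).induce s')
        (fun p => ⟨im B D S p.1, (mem_im p.1).mpr p.2⟩)
        (fun a b hab => newTree_adj_im B D tS hab) (hc.preconnected ⟨t, ht⟩ ⟨t₀, ht₀⟩)
    rintro ⟨a | ⟨⟨S', s⟩ | ⟨S', Q'⟩⟩, hy⟩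
    · exact absurd (show vm B S u ∈ newBag B D tS htS (il B D a) from hy) (by simp)
    · have h' : S = S' ∧ u ∈ D.bag s := by simpa [hs'] using hy
      obtain ⟨rfl, hmem⟩ := h'
      exact him s hmem
    · have h' : S = S' ∧ u ∈ (Q' : Set B.V) := by simpa [hs'] using hy
      obtain ⟨rfl, hmem⟩ := h'
      have hstep : ((newTree B D tS).induce s').Adj
          ⟨ir B D S Q', hy⟩ ⟨im B D S (tS Q'), (mem_im (tS Q')).mpr (htS Q' hmem)⟩ :=
        (newTree_adj_attach2 B D tS S Q').symm
      exact hstep.reachable.trans (him (tS Q') (htS Q' hmem))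
  · -- v = vr S Q
    set s' : Set (D.ι ⊕ ((↥B.S × D.ι) ⊕ (↥B.S × ↥B.S))) :=
      {t | vr B S Q ∈ newBag B D tS htS t} with hs'
    have hbase : (ir B D S Q) ∈ s' := by simp [hs']
    apply connected_of_base (⟨ir B D S Q, hbase⟩ : ↥s')
    rintro ⟨a | ⟨⟨S', s⟩ | ⟨S', Q'⟩⟩, hy⟩
    · exact absurd (show vr B S Q ∈ newBag B D tS htS (il B D a) from hy) (by simp)
    · exact absurd (show vr B S Q ∈ newBag B D tS htS (im B D S' s) from hy) (by simp)
    · have h' : S = S' ∧ Q = Q' := by simpa [hs'] using hy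
      obtain ⟨rfl, rfl⟩ := h'
      exact Reachable.refl _

lemma adj_vl_vl {a c : B.V} (h : (burlingNext B).G.Adj (vl B a) (vl B c)) : B.G.Adj a c := by
  rcases nextAdj_elim B h with ⟨a', b', h', he1, he2⟩ | ⟨S, a', b', h', he1, he2⟩ |
    ⟨S, Q, w, hw, ⟨he1, he2⟩ | ⟨he1, he2⟩⟩
  · obtain rfl := Sum.inl.inj he1
    obtain rfl := Sum.inl.inj he2
    exact h'
  · simp [burlingNext, vl, vm, Sum.inl.injEq, Sum.inr.injEq, Prod.mk.injEq] at he1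
  · simp [burlingNext, vl, vr, Sum.inl.injEq, Sum.inr.injEq, Prod.mk.injEq] at he1
  · simp [burlingNext, vl, vm, Sum.inl.injEq, Sum.inr.injEq, Prod.mk.injEq] at he2

lemma not_adj_vl_vm {a : B.V} {S : ↥B.S} {c : B.V} :
    ¬ (burlingNext B).G.Adj (vl B a) (vm B S c) := by
  intro h
  rcases nextAdj_elim B h with ⟨a', b', h', he1, he2⟩ | ⟨S', a', b', h', he1, he2⟩ |
    ⟨S', Q, w, hw, ⟨he1, he2⟩ | ⟨he1, he2⟩⟩
  · simp [burlingNext, vl, vm, Sum.inl.injEq, Sum.inr.injEq, Prod.mk.injEq] at he2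
  · simp [burlingNext, vl, vm, Sum.inl.injEq, Sum.inr.injEq, Prod.mk.injEq] at he1
  · simp [burlingNext, vl, vr, Sum.inl.injEq, Sum.inr.injEq, Prod.mk.injEq] at he1
  · simp [burlingNext, vl, vm, Sum.inl.injEq, Sum.inr.injEq, Prod.mk.injEq] at he2

lemma not_adj_vl_vr {a : B.V} {S Q : ↥B.S} :
    ¬ (burlingNext B).G.Adj (vl B a) (vr B S Q) := by
  intro h
  rcases nextAdj_elim B h with ⟨a', b', h', he1, he2⟩ | ⟨S', a', b', h', he1, he2⟩ |
    ⟨S', Q', w, hw, ⟨he1, he2⟩ | ⟨he1, he2⟩⟩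
  · simp [burlingNext, vl, vr, Sum.inl.injEq, Sum.inr.injEq, Prod.mk.injEq] at he2
  · simp [burlingNext, vl, vm, Sum.inl.injEq, Sum.inr.injEq, Prod.mk.injEq] at he1
  · simp [burlingNext, vl, vr, Sum.inl.injEq, Sum.inr.injEq, Prod.mk.injEq] at he1
  · simp [burlingNext, vl, vm, Sum.inl.injEq, Sum.inr.injEq, Prod.mk.injEq] at he2

lemma adj_vm_vm {S S' : ↥B.S} {a c : B.V} (h : (burlingNext B).G.Adj (vm B S a) (vm B S' c)) :
    S = S' ∧ B.G.Adj a c := by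
  rcases nextAdj_elim B h with ⟨a', b', h', he1, he2⟩ | ⟨S'', a', b', h', he1, he2⟩ |
    ⟨S'', Q, w, hw, ⟨he1, he2⟩ | ⟨he1, he2⟩⟩
  · simp [burlingNext, vl, vm, Sum.inl.injEq, Sum.inr.injEq, Prod.mk.injEq] at he1
  · obtain ⟨rfl, rfl⟩ : S = S'' ∧ a = a' := by
      simpa [burlingNext, vm, Sum.inl.injEq, Sum.inr.injEq, Prod.mk.injEq] using he1
    obtain ⟨rfl, rfl⟩ : S' = S ∧ c = b' := by
      simpa [burlingNext, vm, Sum.inl.injEq, Sum.inr.injEq, Prod.mk.injEq] using he2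
    exact ⟨rfl, h'⟩
  · simp [burlingNext, vm, vr, Sum.inl.injEq, Sum.inr.injEq, Prod.mk.injEq] at he1
  · simp [burlingNext, vm, vr, Sum.inl.injEq, Sum.inr.injEq, Prod.mk.injEq] at he1

lemma adj_vm_vr {S : ↥B.S} {a : B.V} {S' Q' : ↥B.S}
    (h : (burlingNext B).G.Adj (vm B S a) (vr B S' Q')) :
    S = S' ∧ a ∈ (Q' : Set B.V) := by
  rcases nextAdj_elim B h with ⟨a', b', h', he1, he2⟩ | ⟨S'', a', b', h', he1, he2⟩ |
    ⟨S'', Q'', w, hw, ⟨he1, he2⟩ | ⟨he1, he2⟩⟩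
  · simp [burlingNext, vl, vm, Sum.inl.injEq, Sum.inr.injEq, Prod.mk.injEq] at he1
  · simp [burlingNext, vm, vr, Sum.inl.injEq, Sum.inr.injEq, Prod.mk.injEq] at he2
  · simp [burlingNext, vm, vr, Sum.inl.injEq, Sum.inr.injEq, Prod.mk.injEq] at he1
  · obtain ⟨rfl, rfl⟩ : S' = S'' ∧ Q' = Q'' := by
      simpa [burlingNext, vr, Sum.inl.injEq, Sum.inr.injEq, Prod.mk.injEq] using he1
    obtain ⟨rfl, rfl⟩ : S = S' ∧ a = w := by
      simpa [burlingNext, vm, Sum.inl.injEq, Sum.inr.injEq, Prod.mk.injEq] using he2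
    exact ⟨rfl, hw⟩

lemma not_adj_vr_vr {S Q S' Q' : ↥B.S} :
    ¬ (burlingNext B).G.Adj (vr B S Q) (vr B S' Q') := by
  intro h
  rcases nextAdj_elim B h with ⟨a', b', h', he1, he2⟩ | ⟨S'', a', b', h', he1, he2⟩ |
    ⟨S'', Q'', w, hw, ⟨he1, he2⟩ | ⟨he1, he2⟩⟩
  · simp [burlingNext, vl, vr, Sum.inl.injEq, Sum.inr.injEq, Prod.mk.injEq] at he1
  · simp [burlingNext, vm, vr, Sum.inl.injEq, Sum.inr.injEq, Prod.mk.injEq] at he1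
  · simp [burlingNext, vm, vr, Sum.inl.injEq, Sum.inr.injEq, Prod.mk.injEq] at he2
  · simp [burlingNext, vm, vr, Sum.inl.injEq, Sum.inr.injEq, Prod.mk.injEq] at he2

variable (hstab : ∀ A ∈ B.S, ∀ u ∈ A, ∀ v ∈ A, ¬ B.G.Adj u v)

include hstab in
lemma newBag_starForest (t : D.ι ⊕ ((↥B.S × D.ι) ⊕ (↥B.S × ↥B.S)))
    (hstar : ∀ t, IsStarForest (B.G.induce ↑(D.bag t))) :
    IsStarForest ((burlingNext B).G.induce ↑(newBag B D tS htS t)) := by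
  obtain ⟨t₀⟩ | ⟨⟨S, s₀⟩ | ⟨S, Q⟩⟩ := t
  · -- bag of il t₀
    rintro ⟨xa | ⟨⟨S', c⟩ | ⟨S', Q'⟩⟩, hx⟩ ⟨ya | ⟨⟨S'', d⟩ | ⟨S'', Q''⟩⟩, hy⟩ hadj
    · -- (inl, inl)
      have hx' : xa ∈ D.bag t₀ := by simpa using Finset.mem_coe.mp hx
      have hy' : ya ∈ D.bag t₀ := by simpa using Finset.mem_coe.mp hy
      have hab : B.G.Adj xa ya := adj_vl_vl B (by exact hadj)
      rcases hstar t₀ ⟨xa, hx'⟩ ⟨ya, hy'⟩ (by exact hab) with hL | hR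
      · left
        rintro ⟨za | ⟨⟨S₃, e⟩ | ⟨S₃, Q₃⟩⟩, hz⟩ hadjz
        · have hz' : za ∈ D.bag t₀ := by simpa using Finset.mem_coe.mp hz
          have : B.G.Adj xa za := adj_vl_vl B (by exact hadjz)
          have := hL ⟨za, hz'⟩ (by exact this)
          have hzb : za = ya := congrArg Subtype.val this
          exact Subtype.ext (congrArg Sum.inl hzb)
        · exact absurd (by exact hadjz) (not_adj_vl_vm B)
        · exact absurd (by exact hadjz) (not_adj_vl_vr B)
      · right
        rintro ⟨za | ⟨⟨S₃, e⟩ | ⟨S₃, Q₃⟩⟩, hz⟩ hadjz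
        · have hz' : za ∈ D.bag t₀ := by simpa using Finset.mem_coe.mp hz
          have : B.G.Adj ya za := adj_vl_vl B (by exact hadjz)
          have := hR ⟨za, hz'⟩ (by exact this)
          have hzb : za = xa := congrArg Subtype.val this
          exact Subtype.ext (congrArg Sum.inl hzb)
        · exact absurd (by exact hadjz) (not_adj_vl_vm B)
        · exact absurd (by exact hadjz) (not_adj_vl_vr B)
    · exact absurd (show vm B S'' d ∈ newBag B D tS htS (il B D t₀) from hy) (by simp)
    · exact absurd (show vr B S'' Q'' ∈ newBag B D tS htS (il B D t₀) from hy) (by simp)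
    · exact absurd (show vm B S' c ∈ newBag B D tS htS (il B D t₀) from hx) (by simp)
    · exact absurd (show vm B S' c ∈ newBag B D tS htS (il B D t₀) from hx) (by simp)
    · exact absurd (show vm B S' c ∈ newBag B D tS htS (il B D t₀) from hx) (by simp)
    · exact absurd (show vr B S' Q' ∈ newBag B D tS htS (il B D t₀) from hx) (by simp)
    · exact absurd (show vr B S' Q' ∈ newBag B D tS htS (il B D t₀) from hx) (by simp)
    · exact absurd (show vr B S' Q' ∈ newBag B D tS htS (il B D t₀) from hx) (by simp)
  · -- bag of im S s₀
    rintro ⟨xa | ⟨⟨S', c⟩ | ⟨S', Q'⟩⟩, hx⟩ ⟨ya | ⟨⟨S'', d⟩ | ⟨S'', Q''⟩⟩, hy⟩ hadj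
    · have hx' : xa ∈ (S : Set B.V) := by simpa using Finset.mem_coe.mp hx
      have hy' : ya ∈ (S : Set B.V) := by simpa using Finset.mem_coe.mp hy
      exact absurd (adj_vl_vl B (by exact hadj)) (hstab S S.2 xa hx' ya hy')
    · exact absurd (by exact hadj) (not_adj_vl_vm B)
    · exact absurd (show vr B S'' Q'' ∈ newBag B D tS htS (im B D S s₀) from hy) (by simp)
    · exact absurd (by exact hadj.symm) (not_adj_vl_vm B)
    · -- (im, im): main case
      obtain ⟨hE1, hc⟩ : S' = S ∧ c ∈ D.bag s₀ := by simpa using Finset.mem_coe.mp hx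
      have hE1' := hE1.symm
      subst hE1'
      obtain ⟨hE2, hd⟩ : S'' = S ∧ d ∈ D.bag s₀ := by simpa using Finset.mem_coe.mp hy
      have hE2' := hE2.symm
      subst hE2'
      have hcd : B.G.Adj c d := (adj_vm_vm B (by exact hadj)).2
      rcases hstar s₀ ⟨c, hc⟩ ⟨d, hd⟩ (by exact hcd) with hL | hR
      · left
        rintro ⟨za | ⟨⟨S₃, e⟩ | ⟨S₃, Q₃⟩⟩, hz⟩ hadjz
        · exact absurd (by exact hadjz.symm) (not_adj_vl_vm B)
        · obtain ⟨hE3, he⟩ : S₃ = S ∧ e ∈ D.bag s₀ := by simpa using Finset.mem_coe.mp hz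
          have hE3' := hE3.symm
          subst hE3'
          have : B.G.Adj c e := (adj_vm_vm B (by exact hadjz)).2
          have := hL ⟨e, he⟩ (by exact this)
          have hzb : e = d := congrArg Subtype.val this
          subst hzb
          rfl
        · exact absurd (show vr B S₃ Q₃ ∈ newBag B D tS htS (im B D S s₀) from hz) (by simp)
      · right
        rintro ⟨za | ⟨⟨S₃, e⟩ | ⟨S₃, Q₃⟩⟩, hz⟩ hadjz
        · exact absurd (by exact hadjz.symm) (not_adj_vl_vm B)
        · obtain ⟨hE4, he⟩ : S₃ = S ∧ e ∈ D.bag s₀ := by simpa using Finset.mem_coe.mp hz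
          have hE4' := hE4.symm
          subst hE4'
          have : B.G.Adj d e := (adj_vm_vm B (by exact hadjz)).2
          have := hR ⟨e, he⟩ (by exact this)
          have hzb : e = c := congrArg Subtype.val this
          subst hzb
          rfl
        · exact absurd (show vr B S₃ Q₃ ∈ newBag B D tS htS (im B D S s₀) from hz) (by simp)
    · exact absurd (show vr B S'' Q'' ∈ newBag B D tS htS (im B D S s₀) from hy) (by simp)
    · exact absurd (show vr B S' Q' ∈ newBag B D tS htS (im B D S s₀) from hx) (by simp)
    · exact absurd (show vr B S' Q' ∈ newBag B D tS htS (im B D S s₀) from hx) (by simp)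
    · exact absurd (show vr B S' Q' ∈ newBag B D tS htS (im B D S s₀) from hx) (by simp)
  · -- bag of ir S Q
    rintro ⟨xa | ⟨⟨S', c⟩ | ⟨S', Q'⟩⟩, hx⟩ ⟨ya | ⟨⟨S'', d⟩ | ⟨S'', Q''⟩⟩, hy⟩ hadj
    · have hx' : xa ∈ (S : Set B.V) := by simpa using Finset.mem_coe.mp hx
      have hy' : ya ∈ (S : Set B.V) := by simpa using Finset.mem_coe.mp hy
      exact absurd (adj_vl_vl B (by exact hadj)) (hstab S S.2 xa hx' ya hy')
    · exact absurd (by exact hadj) (not_adj_vl_vm B)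
    · exact absurd (by exact hadj) (not_adj_vl_vr B)
    · exact absurd (by exact hadj.symm) (not_adj_vl_vm B)
    · -- (im, im)
      obtain ⟨hE5, hc⟩ : S' = S ∧ c ∈ (Q : Set B.V) := by simpa using Finset.mem_coe.mp hx
      have hE5' := hE5.symm
      subst hE5'
      obtain ⟨hE6, hd⟩ : S'' = S ∧ d ∈ (Q : Set B.V) := by simpa using Finset.mem_coe.mp hy
      have hE6' := hE6.symm
      subst hE6'
      exact absurd ((adj_vm_vm B (by exact hadj)).2) (hstab Q Q.2 c hc d hd)
    · -- (im, ir): y is the center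
      obtain ⟨hE7, hc⟩ : S' = S ∧ c ∈ (Q : Set B.V) := by simpa using Finset.mem_coe.mp hx
      have hE7' := hE7.symm
      subst hE7'
      obtain ⟨hE8a, hE8b⟩ : S'' = S ∧ Q'' = Q := by simpa using Finset.mem_coe.mp hy
      have hE8a' := hE8a.symm
      subst hE8a'
      have hE8b' := hE8b.symm
      subst hE8b'
      left
      rintro ⟨za | ⟨⟨S₃, e⟩ | ⟨S₃, Q₃⟩⟩, hz⟩ hadjz
      · exact absurd (by exact hadjz.symm) (not_adj_vl_vm B)
      · obtain ⟨hE9, he⟩ : S₃ = S ∧ e ∈ (Q : Set B.V) := by simpa using Finset.mem_coe.mp hz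
        have hE9' := hE9.symm
        subst hE9'
        exact absurd ((adj_vm_vm B (by exact hadjz)).2) (hstab Q Q.2 c hc e he)
      · obtain ⟨hE10a, hE10b⟩ : S₃ = S ∧ Q₃ = Q := by simpa using Finset.mem_coe.mp hz
        have hE10a' := hE10a.symm
        subst hE10a'
        have hE10b' := hE10b.symm
        subst hE10b'
        rfl
    · exact absurd (by exact hadj.symm) (not_adj_vl_vr B)
    · -- (ir, im): x is the center
      obtain ⟨hE11a, hE11b⟩ : S' = S ∧ Q' = Q := by simpa using Finset.mem_coe.mp hx
      have hE11a' := hE11a.symm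
      subst hE11a'
      have hE11b' := hE11b.symm
      subst hE11b'
      obtain ⟨hE12, hd⟩ : S'' = S ∧ d ∈ (Q : Set B.V) := by simpa using Finset.mem_coe.mp hy
      have hE12' := hE12.symm
      subst hE12'
      right
      rintro ⟨za | ⟨⟨S₃, e⟩ | ⟨S₃, Q₃⟩⟩, hz⟩ hadjz
      · exact absurd (by exact hadjz.symm) (not_adj_vl_vm B)
      · obtain ⟨hE13, he⟩ : S₃ = S ∧ e ∈ (Q : Set B.V) := by simpa using Finset.mem_coe.mp hz
        have hE13' := hE13.symm
        subst hE13'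
        exact absurd ((adj_vm_vm B (by exact hadjz)).2) (hstab Q Q.2 d hd e he)
      · obtain ⟨hE14a, hE14b⟩ : S₃ = S ∧ Q₃ = Q := by simpa using Finset.mem_coe.mp hz
        have hE14a' := hE14a.symm
        subst hE14a'
        have hE14b' := hE14b.symm
        subst hE14b'
        rfl
    · exact absurd (by exact hadj) (not_adj_vr_vr B)

lemma newBag_subsets : ∀ A ∈ (burlingNext B).S, ∃ t, A ⊆ ↑(newBag B D tS htS t) := by
  rintro A ⟨S, Q, hA | hA⟩
  · refine ⟨ir B D S Q, ?_⟩
    rw [hA]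
    rintro x (⟨a, ha, rfl⟩ | ⟨a, ha, rfl⟩)
    · exact Finset.mem_coe.mpr (by simp [ha])
    · exact Finset.mem_coe.mpr (by simp [ha])
  · refine ⟨ir B D S Q, ?_⟩
    rw [hA]
    rintro x (⟨a, ha, rfl⟩ | rfl)
    · exact Finset.mem_coe.mpr (by simp [ha])
    · exact Finset.mem_coe.mpr (by simp)

include hstab in
lemma newBag_stable : ∀ A ∈ (burlingNext B).S, ∀ u ∈ A, ∀ v ∈ A,
    ¬ (burlingNext B).G.Adj u v := by
  rintro A ⟨S, Q, hA | hA⟩ u hu v hv hadj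
  · rw [hA] at hu hv
    rcases hu with ⟨a, ha, rfl⟩ | ⟨a, ha, rfl⟩ <;> rcases hv with ⟨b, hb, rfl⟩ | ⟨b, hb, rfl⟩
    · exact hstab S S.2 a ha b hb (adj_vl_vl B hadj)
    · exact not_adj_vl_vm B hadj
    · exact not_adj_vl_vm B hadj.symm
    · exact hstab Q Q.2 a ha b hb ((adj_vm_vm B hadj).2)
  · rw [hA] at hu hv
    rcases hu with ⟨a, ha, rfl⟩ | rfl <;> rcases hv with ⟨b, hb, rfl⟩ | rfl
    · exact hstab S S.2 a ha b hb (adj_vl_vl B hadj)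
    · exact not_adj_vl_vr B hadj
    · exact not_adj_vl_vr B hadj.symm
    · exact not_adj_vr_vr B hadj

noncomputable def newDecomp : TreeDecomp (burlingNext B).G where
  ι := D.ι ⊕ ((↥B.S × D.ι) ⊕ (↥B.S × ↥B.S))
  tree := newTree B D tS
  isTree := newTree_isTree B D tS
  bag := newBag B D tS htS
  covers_edge := newBag_covers B D tS htS
  support_connected := newBag_support B D tS htS

end Step

lemma burling_step (B : BurlingStep) (D : TreeDecomp B.G)
    (hstar : ∀ t, IsStarForest (B.G.induce ↑(D.bag t)))
    (hsub : ∀ A ∈ B.S, ∃ t, A ⊆ ↑(D.bag t))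
    (hstab : ∀ A ∈ B.S, ∀ u ∈ A, ∀ v ∈ A, ¬ B.G.Adj u v) :
    ∃ D' : TreeDecomp (burlingNext B).G,
      (∀ t, IsStarForest ((burlingNext B).G.induce ↑(D'.bag t))) ∧
      (∀ A ∈ (burlingNext B).S, ∃ t, A ⊆ ↑(D'.bag t)) ∧
      (∀ A ∈ (burlingNext B).S, ∀ u ∈ A, ∀ v ∈ A, ¬ (burlingNext B).G.Adj u v) := by
  have hch : ∀ S : ↥B.S, ∃ t, (S : Set B.V) ⊆ ↑(D.bag t) := fun S => hsub S.1 S.2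
  choose tS htS using hch
  exact ⟨Step.newDecomp B D tS htS,
    fun t => Step.newBag_starForest B D tS htS hstab t hstar,
    Step.newBag_subsets B D tS htS,
    Step.newBag_stable B hstab⟩

lemma burling_key (n : ℕ) :
    ∃ D : TreeDecomp (burling n).G,
      (∀ t, IsStarForest ((burling n).G.induce ↑(D.bag t))) ∧
      (∀ A ∈ (burling n).S, ∃ t, A ⊆ ↑(D.bag t)) ∧
      (∀ A ∈ (burling n).S, ∀ u ∈ A, ∀ v ∈ A, ¬ (burling n).G.Adj u v) := by
  induction n with
  | zero =>
    refine ⟨⟨Unit, ⊥, ⟨?_, isAcyclic_bot⟩, fun _ => {()}, ?_, ?_⟩, ?_, ?_, ?_⟩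
    · rw [SimpleGraph.connected_iff]
      refine ⟨fun a b => ?_, ⟨()⟩⟩
      rw [Subsingleton.elim a b]
    · intro u v h
      simp only [burling] at h
      exact (h : False).elim
    · intro v
      apply connected_of_base
        (⟨(), Finset.mem_singleton.mpr rfl⟩ : ↥{t : Unit | v ∈ ({()} : Finset Unit)})
      intro y
      rw [Subsingleton.elim y ⟨(), Finset.mem_singleton.mpr rfl⟩]
      exact Reachable.refl _
    · intro t u v h
      have h' := h
      simp only [burling] at h'
      exact absurd h' (fun h => h)
    · rintro A hA
      simp only [burling, Set.mem_singleton_iff] at hA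
      subst hA
      exact ⟨(), fun x _ => Finset.mem_coe.mpr (Finset.mem_singleton.mpr rfl)⟩
    · intro A _ u _ v _ h
      simp only [burling] at h
      exact (h : False).elim
  | succ n ih =>
    obtain ⟨D, hstar, hsub, hstab⟩ := ih
    exact burling_step (burling n) D hstar hsub hstab

lemma IsStarForest.colorable {W : Type} {G : SimpleGraph W} (h : IsStarForest G) :
    G.Colorable 2 := by
  classical
  set r : W → W → Prop := WellOrderingRel with hr
  have htri : ∀ a b : W, a ≠ b → r a b ∨ r b a := by
    intro a b hab
    rcases trichotomous_of r a b with h1 | h1 | h1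
    · exact Or.inl h1
    · exact absurd h1 hab
    · exact Or.inr h1
  have hasymm : ∀ a b : W, r a b → ¬ r b a := fun a b => asymm
  set leaf : W → Prop := fun u => ∃ v, G.Adj u v ∧ (∀ w, G.Adj u w → w = v) ∧
    (¬(∀ w, G.Adj v w → w = u) ∨ r v u) with hleaf
  have key : ∀ u v, G.Adj u v → (leaf u ↔ ¬ leaf v) := by
    intro u v huv
    have hchar : ∀ a b, G.Adj a b →
        (leaf a ↔ ((∀ w, G.Adj a w → w = b) ∧ (¬(∀ w, G.Adj b w → w = a) ∨ r b a))) := by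
      intro a b hab
      constructor
      · rintro ⟨c, hac, hu, hrest⟩
        have : b = c := hu b hab
        subst this
        exact ⟨hu, hrest⟩
      · rintro ⟨hu, hrest⟩
        exact ⟨b, hab, hu, hrest⟩
    rw [hchar u v huv, hchar v u huv.symm]
    rcases h u v huv with hPu | hPv
    · rcases Classical.em (∀ w, G.Adj v w → w = u) with hPv | hPv
      · -- both unique neighbors
        constructor
        · rintro ⟨-, hc | hru⟩
          · exact absurd hPv hc
          · rintro ⟨-, hc | hrv⟩
            · exact hc hPu
            · exact hasymm _ _ hru hrv
        · intro hn
          refine ⟨hPu, Or.inr ?_⟩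
          rcases htri u v huv.ne with h1 | h1
          · exact absurd ⟨hPv, Or.inr h1⟩ hn
          · exact h1
      · constructor
        · rintro - ⟨hc, -⟩
          exact hPv hc
        · intro _
          exact ⟨hPu, Or.inl hPv⟩
    · -- v's nbrs all = u, u has another neighbor or not
      rcases Classical.em (∀ w, G.Adj u w → w = v) with hPu | hPu
      · constructor
        · rintro ⟨-, hc | hru⟩
          · exact absurd hPv hc
          · rintro ⟨-, hc | hrv⟩
            · exact hc hPu
            · exact hasymm _ _ hru hrv
        · intro hn
          refine ⟨hPu, Or.inr ?_⟩
          rcases htri u v huv.ne with h1 | h1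
          · exact absurd ⟨hPv, Or.inr h1⟩ hn
          · exact h1
      · constructor
        · rintro ⟨hc, -⟩
          exact absurd hc hPu
        · intro hn
          exact absurd ⟨hPv, Or.inl hPu⟩ hn
  refine ⟨⟨fun u => if leaf u then (1 : Fin 2) else 0, ?_⟩⟩
  intro u v huv
  rcases Classical.em (leaf u) with hu | hu
  · have hv : ¬ leaf v := (key u v huv).mp hu
    simp [hu, hv]
  · have hv : leaf v := by
      by_contra hv
      exact hu ((key v u huv.symm).mpr hu |> fun _ => ((key u v huv).mpr hv))
    simp [hu, hv]

lemma IsStarForest.chiNat_le {W : Type} {G : SimpleGraph W} (h : IsStarForest G) :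
    chiNat G ≤ 2 := by
  have := h.colorable.chromaticNumber_le
  have h2 : G.chromaticNumber ≤ (2 : ℕ∞) := by exact_mod_cast this
  calc chiNat G = G.chromaticNumber.toNat := rfl
    _ ≤ (2 : ℕ∞).toNat := ENat.toNat_le_toNat h2 (by simp)
    _ = 2 := rfl


theorem stmt13 (n : ℕ) :
    (∃ D : TreeDecomp (burling n).G,
      (∀ t, IsStarForest ((burling n).G.induce ↑(D.bag t))) ∧
      (∀ A ∈ (burling n).S, ∃ t, A ⊆ ↑(D.bag t))) ∧
    treeChi (burling n).G ≤ 2 := by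
  obtain ⟨D, hstar, hsub, hstab⟩ := burling_key n
  refine ⟨⟨D, hstar, hsub⟩, ?_⟩
  apply Nat.sInf_le
  exact ⟨D, fun t => IsStarForest.chiNat_le (hstar t)⟩
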